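/- The n-fold integral of the squared Vandermonde determinant times a product of weights equals n! times the Hankel determinant of moments: ∫···∫ ∏_{i<j}(x_i - x_j)^2 ∏_{j=1}^n w(x_j) dx_1···dx_n = n! · det(μ_{i+j})_{0≤i,j≤n-1}, where μ_k = ∫ x^k w(x) dx. -/

import Mathlib

open MeasureTheory Finset Equiv

namespace Stmt1Aux

variable {n : ℕ}

noncomputable def eps (σ : Equiv.Perm (Fin n)) : ℂ := ((Equiv.Perm.sign σ : ℤ) : ℂ)

lemma prod_filter_eq (f : Fin n → Fin n → ℂ) :
    ∏ p ∈ Finset.univ.filter (fun p : Fin n × Fin n => p.1 < p.2), f p.1 p.2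
      = ∏ i, ∏ j ∈ Finset.Ioi i, f i j := by
  rw [Finset.prod_sigma']
  exact Finset.prod_nbij' (fun p => ⟨p.1, p.2⟩) (fun p => (p.1, p.2))
    (by simp) (by simp) (by simp) (by simp) (by simp)

lemma det_vdm (v : Fin n → ℂ) :
    Matrix.det (Matrix.vandermonde v)
      = ∑ σ : Equiv.Perm (Fin n), eps σ * ∏ j, v j ^ ((σ j : ℕ)) := by
  rw [Matrix.det_apply']
  refine Fintype.sum_equiv (Equiv.inv (Equiv.Perm (Fin n))) _ _ fun σ => ?_
  simp only [Equiv.inv_apply, Equiv.Perm.sign_inv, eps]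
  congr 1
  rw [← Equiv.prod_comp σ⁻¹ (fun i => Matrix.vandermonde v (σ i) i)]
  simp [Matrix.vandermonde_apply]

lemma integrand_eq (w : ℝ → ℂ) (x : Fin n → ℝ) :
    (∏ p ∈ Finset.univ.filter fun p : Fin n × Fin n => p.1 < p.2,
        ((x p.1 : ℂ) - (x p.2 : ℂ))) ^ 2 * ∏ j, w (x j)
    = ∑ σ : Equiv.Perm (Fin n), ∑ τ : Equiv.Perm (Fin n),
        (eps σ * eps τ) *
          ∏ j, ((x j : ℂ) ^ ((σ j : ℕ) + (τ j : ℕ)) * w (x j)) := by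
  set v : Fin n → ℂ := fun j => (x j : ℂ) with hv
  have hsq : (∏ p ∈ Finset.univ.filter fun p : Fin n × Fin n => p.1 < p.2,
      (v p.1 - v p.2)) ^ 2 = (Matrix.det (Matrix.vandermonde v)) ^ 2 := by
    rw [Matrix.det_vandermonde, ← prod_filter_eq (fun i j => v j - v i),
      ← Finset.prod_pow, ← Finset.prod_pow]
    exact Finset.prod_congr rfl fun p _ => by rw [← neg_sub, neg_sq]
  show (∏ p ∈ Finset.univ.filter fun p : Fin n × Fin n => p.1 < p.2,
      (v p.1 - v p.2)) ^ 2 * ∏ j, w (x j) = _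
  rw [hsq, det_vdm, sq, Finset.sum_mul_sum, Finset.sum_mul]
  refine Finset.sum_congr rfl fun σ _ => ?_
  rw [Finset.sum_mul]
  refine Finset.sum_congr rfl fun τ _ => ?_
  have : ∏ j, (v j ^ ((σ j : ℕ) + (τ j : ℕ)) * w (x j))
      = ((∏ j, v j ^ (σ j : ℕ)) * ∏ j, v j ^ (τ j : ℕ)) * ∏ j, w (x j) := by
    rw [← Finset.prod_mul_distrib, ← Finset.prod_mul_distrib]
    exact Finset.prod_congr rfl fun j _ => by rw [pow_add]
  rw [this]; ring

lemma sum_eq (μ : ℕ → ℂ) :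
    ∑ σ : Equiv.Perm (Fin n), ∑ τ : Equiv.Perm (Fin n),
        (eps σ * eps τ) * ∏ j, μ ((σ j : ℕ) + (τ j : ℕ))
      = (Nat.factorial n : ℂ) *
        Matrix.det (Matrix.of fun i j : Fin n => μ ((i : ℕ) + (j : ℕ))) := by
  have hdet : Matrix.det (Matrix.of fun i j : Fin n => μ ((i : ℕ) + (j : ℕ)))
      = ∑ τ : Equiv.Perm (Fin n), eps τ * ∏ i, μ ((τ i : ℕ) + (i : ℕ)) := by
    rw [Matrix.det_apply']; rfl
  have hτ : ∀ σ : Equiv.Perm (Fin n),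
      ∑ τ : Equiv.Perm (Fin n), eps τ * ∏ j, μ ((σ j : ℕ) + (τ j : ℕ))
        = eps σ * Matrix.det (Matrix.of fun i j : Fin n => μ ((i : ℕ) + (j : ℕ))) := by
    intro σ
    rw [hdet, Finset.mul_sum]
    refine Fintype.sum_equiv (Equiv.mulRight σ⁻¹) _ _ fun τ => ?_
    simp only [Equiv.coe_mulRight]
    have h1 : eps σ * eps (τ * σ⁻¹) = eps τ := by
      rcases Int.units_eq_one_or (Equiv.Perm.sign σ) with h | h <;>
        simp [eps, map_mul, Equiv.Perm.sign_inv, h]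
    have h2 : ∏ j, μ ((σ j : ℕ) + (τ j : ℕ)) = ∏ i, μ (((τ * σ⁻¹) i : ℕ) + (i : ℕ)) := by
      rw [← Equiv.prod_comp σ (fun i => μ (((τ * σ⁻¹) i : ℕ) + (i : ℕ)))]
      refine Finset.prod_congr rfl fun j _ => ?_
      simp [Equiv.Perm.mul_apply, Nat.add_comm]
    rw [h2, ← h1]; ring
  calc ∑ σ : Equiv.Perm (Fin n), ∑ τ : Equiv.Perm (Fin n),
        (eps σ * eps τ) * ∏ j, μ ((σ j : ℕ) + (τ j : ℕ))
      = ∑ σ : Equiv.Perm (Fin n), eps σ *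
          ∑ τ : Equiv.Perm (Fin n), eps τ * ∏ j, μ ((σ j : ℕ) + (τ j : ℕ)) := by
        refine Finset.sum_congr rfl fun σ _ => ?_
        rw [Finset.mul_sum]
        exact Finset.sum_congr rfl fun τ _ => by ring
    _ = ∑ σ : Equiv.Perm (Fin n), (eps σ * eps σ) *
          Matrix.det (Matrix.of fun i j : Fin n => μ ((i : ℕ) + (j : ℕ))) := by
        refine Finset.sum_congr rfl fun σ _ => ?_
        rw [hτ σ]; ring
    _ = _ := by
        have h1 : ∀ σ : Equiv.Perm (Fin n), eps σ * eps σ = 1 := fun σ => by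
          rcases Int.units_eq_one_or (Equiv.Perm.sign σ) with h | h <;> simp [eps, h]
        simp only [h1, one_mul, Finset.sum_const, Finset.card_univ, Fintype.card_perm,
          Fintype.card_fin, nsmul_eq_mul]

end Stmt1Aux

open Stmt1Aux
theorem stmt1 (n : ℕ) (w : ℝ → ℂ) (μ : ℕ → ℂ)
    (hw : ∀ k : ℕ, Integrable (fun x : ℝ => (x : ℂ) ^ k * w x))
    (hμ : ∀ k : ℕ, μ k = ∫ x : ℝ, (x : ℂ) ^ k * w x)
    (hint : Integrable (fun x : Fin n → ℝ =>
      (∏ p ∈ Finset.univ.filter fun p : Fin n × Fin n => p.1 < p.2,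
        ((x p.1 : ℂ) - (x p.2 : ℂ))) ^ 2 * ∏ j, w (x j))) :
    (∫ x : Fin n → ℝ,
        (∏ p ∈ Finset.univ.filter fun p : Fin n × Fin n => p.1 < p.2,
          ((x p.1 : ℂ) - (x p.2 : ℂ))) ^ 2 * ∏ j, w (x j))
      = (Nat.factorial n : ℂ) * Matrix.det (Matrix.of fun i j : Fin n => μ ((i : ℕ) + (j : ℕ))) := by
  have hterm : ∀ a : Fin n → ℕ,
      Integrable (fun x : Fin n → ℝ => ∏ j, ((x j : ℂ) ^ (a j) * w (x j))) := fun a =>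
    Integrable.fintype_prod (f := fun j (t : ℝ) => (t : ℂ) ^ (a j) * w t) (fun j => hw (a j))
  have hterm' : ∀ a : Fin n → ℕ,
      (∫ x : Fin n → ℝ, ∏ j, ((x j : ℂ) ^ (a j) * w (x j))) = ∏ j, μ (a j) := by
    intro a
    rw [integral_fintype_prod_volume_eq_prod (f := fun j (t : ℝ) => (t : ℂ) ^ (a j) * w t)]
    exact Finset.prod_congr rfl fun j _ => (hμ (a j)).symm
  calc (∫ x : Fin n → ℝ,
        (∏ p ∈ Finset.univ.filter fun p : Fin n × Fin n => p.1 < p.2,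
          ((x p.1 : ℂ) - (x p.2 : ℂ))) ^ 2 * ∏ j, w (x j))
      = ∫ x : Fin n → ℝ, ∑ σ : Equiv.Perm (Fin n), ∑ τ : Equiv.Perm (Fin n),
          (eps σ * eps τ) * ∏ j, ((x j : ℂ) ^ ((σ j : ℕ) + (τ j : ℕ)) * w (x j)) :=
        integral_congr_ae (Filter.Eventually.of_forall fun x => integrand_eq w x)
    _ = ∑ σ : Equiv.Perm (Fin n), ∑ τ : Equiv.Perm (Fin n),
          (eps σ * eps τ) * ∏ j, μ ((σ j : ℕ) + (τ j : ℕ)) := by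
        rw [integral_finset_sum _ (fun σ _ =>
          integrable_finset_sum _ (fun τ _ => (hterm _).const_mul _))]
        refine Finset.sum_congr rfl fun σ _ => ?_
        rw [integral_finset_sum _ (fun τ _ => (hterm _).const_mul _)]
        refine Finset.sum_congr rfl fun τ _ => ?_
        rw [MeasureTheory.integral_const_mul, hterm']
    _ = _ := sum_eq μ
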